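/- arXiv:1910.00766 — 2 statements merged into one kernel-verified Lean document; each statement's English description precedes it below -/
import Mathlib

section
/- For every κ > 0 there is a constant C_κ ∈ ℝ such that for all β > 0 and N ∈ ℕ with βN ≤ κ, the partition function satisfies (log Z_{β,N})/N ≥ C_κ. -/
open MeasureTheory Real Filter Finset

noncomputable section

/-- The unnormalized density of the beta ensemble with potential `V`,
inverse temperature `β` and `N` particles. -/
def betaWeight (V : ℝ → ℝ) (β : ℝ) (N : ℕ) (lam : Fin N → ℝ) : ℝ :=
  (∏ i : Fin N, ∏ j ∈ Finset.Ioi i, |lam j - lam i| ^ β) * Real.exp (- ∑ i, V (lam i))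

/-- The partition function `Z_{β,N}`. -/
def Zpart (V : ℝ → ℝ) (β : ℝ) (N : ℕ) : ℝ :=
  ∫ lam : Fin N → ℝ, betaWeight V β N lam

namespace BetaAux

/-- negative part of `log |u|`. -/
def ell (u : ℝ) : ℝ := max (-Real.log |u|) 0

lemma ell_nonneg (u : ℝ) : 0 ≤ ell u := le_max_right _ _

lemma measurable_ell : Measurable ell :=
  ((Real.measurable_log.comp measurable_abs).neg).max measurable_const

lemma ell_eq_zero {u : ℝ} (h : 1 ≤ |u|) : ell u = 0 :=
  max_eq_right (neg_nonpos.2 (Real.log_nonneg h))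

lemma exp_neg_ell_le {β u : ℝ} (hβ : 0 ≤ β) (hu : u ≠ 0) :
    Real.exp (-(β * ell u)) ≤ |u| ^ β := by
  rcases le_or_gt 1 |u| with h | h
  · rw [ell_eq_zero h]
    calc Real.exp (-(β * 0)) = 1 := by simp
    _ = (1:ℝ) ^ β := (Real.one_rpow β).symm
    _ ≤ |u| ^ β := Real.rpow_le_rpow zero_le_one h hβ
  · have h0 : 0 < |u| := abs_pos.2 hu
    have hl : Real.log |u| ≤ 0 := Real.log_nonpos (abs_nonneg u) h.le
    have : ell u = -Real.log |u| := max_eq_left (by linarith)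
    rw [this, Real.rpow_def_of_pos h0]
    apply le_of_eq
    ring_nf

lemma intervalIntegrable_ell : IntervalIntegrable ell volume 0 1 := by
  have hb : IntervalIntegrable (fun u : ℝ => 2 * u ^ (-(1/2) : ℝ)) volume 0 1 :=
    (intervalIntegral.intervalIntegrable_rpow' (by norm_num)).const_mul 2
  apply hb.mono_fun
  · exact (measurable_ell.aestronglyMeasurable).restrict
  · apply ae_restrict_of_forall_mem measurableSet_uIoc
    intro u hu
    rw [Set.uIoc_of_le (by norm_num : (0:ℝ) ≤ 1)] at hu
    obtain ⟨h0, h1⟩ := hu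
    have habs : |u| = u := abs_of_pos h0
    have hr : (0:ℝ) < u ^ (-(1/2) : ℝ) := Real.rpow_pos_of_pos h0 _
    have key : ell u ≤ 2 * u ^ (-(1/2) : ℝ) := by
      have hl : Real.log u ≤ 0 := Real.log_nonpos h0.le h1
      have : ell u = -Real.log u := by rw [ell, habs]; exact max_eq_left (by linarith)
      rw [this]
      have hlog : Real.log (u ^ (-(1/2) : ℝ)) = -(1/2) * Real.log u := Real.log_rpow h0 _
      have h2 : Real.log (u ^ (-(1/2) : ℝ)) ≤ u ^ (-(1/2) : ℝ) - 1 :=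
        Real.log_le_sub_one_of_pos hr
      nlinarith
    have key2 : 0 ≤ ell u := ell_nonneg u
    simp only [Real.norm_eq_abs]
    rw [abs_of_nonneg key2, abs_of_pos (by positivity)]
    exact key

lemma integrable_ell : Integrable ell := by
  have h01 : IntervalIntegrable ell volume (-1) 1 := by
    refine IntervalIntegrable.trans (b := 0) ?_ intervalIntegrable_ell
    rw [IntervalIntegrable.iff_comp_neg]
    have : (fun x : ℝ => ell (-x)) = ell := by
      funext x; simp [ell, abs_neg]
    rw [this]
    simpa using intervalIntegrable_ell.symm
  have hIcc : IntegrableOn ell (Set.Icc (-1) 1) := by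
    rwa [intervalIntegrable_iff_integrableOn_Icc_of_le (by norm_num)] at h01
  have : ell = Set.indicator (Set.Icc (-1:ℝ) 1) ell := by
    funext u
    rcases le_or_gt 1 |u| with h | h
    · by_cases hm : u ∈ Set.Icc (-1:ℝ) 1
      · rw [Set.indicator_of_mem hm]
      · rw [Set.indicator_of_notMem hm, ell_eq_zero h]
    · have : u ∈ Set.Icc (-1:ℝ) 1 := by
        constructor <;> [linarith [neg_abs_le u]; linarith [le_abs_self u]]
      rw [Set.indicator_of_mem this]
  rw [this, integrable_indicator_iff measurableSet_Icc]
  exact hIcc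

lemma prod_pair_eq {N : ℕ} (f : Fin N → ℝ) :
    ∏ i, ∏ j ∈ Finset.Ioi i, (f i * f j) = ∏ k, f k ^ (N - 1) := by
  have h1 : ∏ i, ∏ j ∈ Finset.Ioi i, (f i * f j)
      = (∏ i, ∏ j ∈ Finset.Ioi i, f i) * (∏ i, ∏ j ∈ Finset.Ioi i, f j) := by
    rw [← Finset.prod_mul_distrib]
    exact Finset.prod_congr rfl fun i _ => Finset.prod_mul_distrib
  have h2 : (∏ i : Fin N, ∏ j ∈ Finset.Ioi i, f i) = ∏ i : Fin N, f i ^ (Finset.Ioi i).card :=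
    Finset.prod_congr rfl fun i _ => Finset.prod_const _
  have h3 : (∏ i : Fin N, ∏ j ∈ Finset.Ioi i, f j)
      = ∏ j : Fin N, ∏ i ∈ Finset.Iio j, f j := by
    apply Finset.prod_comm'
    intro x y
    simp [Finset.mem_Ioi, Finset.mem_Iio]
  have h4 : (∏ j : Fin N, ∏ i ∈ Finset.Iio j, f j) = ∏ j : Fin N, f j ^ (Finset.Iio j).card :=
    Finset.prod_congr rfl fun j _ => Finset.prod_const _
  rw [h1, h2, h3, h4, ← Finset.prod_mul_distrib]
  apply Finset.prod_congr rfl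
  intro k _
  rw [← pow_add]
  congr 1
  rw [Fin.card_Ioi, Fin.card_Iio]
  omega

lemma betaWeight_cons (V : ℝ → ℝ) (β : ℝ) (N : ℕ) (t : ℝ) (lam : Fin N → ℝ) :
    ((∏ i : Fin (N+1), ∏ j ∈ Finset.Ioi i,
        |(Fin.cons t lam : Fin (N+1) → ℝ) j - (Fin.cons t lam : Fin (N+1) → ℝ) i| ^ β) * Real.exp (- ∑ i, V ((Fin.cons t lam : Fin (N+1) → ℝ) i)))
    = ((∏ i : Fin N, ∏ j ∈ Finset.Ioi i, |lam j - lam i| ^ β) * Real.exp (- ∑ i, V (lam i)))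
      * ((∏ i : Fin N, |lam i - t| ^ β) * Real.exp (-(V t))) := by
  have hprod : (∏ i : Fin (N+1), ∏ j ∈ Finset.Ioi i,
      |(Fin.cons t lam : Fin (N+1) → ℝ) j - (Fin.cons t lam : Fin (N+1) → ℝ) i| ^ β)
      = (∏ i : Fin N, |lam i - t| ^ β) *
        ∏ i : Fin N, ∏ j ∈ Finset.Ioi i, |lam j - lam i| ^ β := by
    rw [Fin.prod_univ_succ]
    congr 1
    · rw [Fin.prod_Ioi_zero]
      exact Finset.prod_congr rfl fun j _ => by simp
    · apply Finset.prod_congr rfl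
      intro i _
      rw [Fin.prod_Ioi_succ]
      exact Finset.prod_congr rfl fun j _ => by simp
  have hsum : (∑ i : Fin (N+1), V ((Fin.cons t lam : Fin (N+1) → ℝ) i)) = V t + ∑ i : Fin N, V (lam i) := by
    rw [Fin.sum_univ_succ]
    simp
  rw [hprod, hsum, neg_add, Real.exp_add]
  ring

def gV (V : ℝ → ℝ) : ℝ → ℝ := fun x => Real.exp (-(V x))

def hVk (V : ℝ → ℝ) (κ : ℝ) : ℝ → ℝ :=
  fun x => (2*(1+x^2)) ^ (κ/2) * Real.exp (-(V x))

lemma gV_nonneg (V : ℝ → ℝ) (x : ℝ) : 0 ≤ gV V x := (Real.exp_pos _).le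

lemma measurable_gV {V : ℝ → ℝ} (hV : Measurable V) : Measurable (gV V) :=
  (hV.neg).exp

lemma one_le_q (x : ℝ) : (1:ℝ) ≤ 2*(1+x^2) := by nlinarith [sq_nonneg x]

lemma measurable_hVk {V : ℝ → ℝ} (hV : Measurable V) (κ : ℝ) : Measurable (hVk V κ) := by
  apply Measurable.mul
  · have hc : Continuous fun x : ℝ => 2*(1+x^2) :=
      continuous_const.mul (continuous_const.add (continuous_pow 2))
    exact (hc.rpow_const (fun x => Or.inl (by nlinarith [sq_nonneg x]))).measurable
  · exact (hV.neg).exp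

lemma gV_le_hVk (V : ℝ → ℝ) {κ : ℝ} (hκ : 0 ≤ κ) (x : ℝ) : gV V x ≤ hVk V κ x := by
  have h1 : (1:ℝ) ≤ (2*(1+x^2)) ^ (κ/2) := by
    have := Real.rpow_le_rpow zero_le_one (one_le_q x) (by linarith : 0 ≤ κ/2)
    rwa [Real.one_rpow] at this
  unfold gV hVk
  exact le_mul_of_one_le_left (Real.exp_pos _).le h1

lemma exists_tail (V : ℝ → ℝ) (κ : ℝ)
    (hVtop : Tendsto (fun x => V x / Real.log (1 + x ^ 2)) atTop atTop)
    (hVbot : Tendsto (fun x => V x / Real.log (1 + x ^ 2)) atBot atTop) :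
    ∃ R : ℝ, 1 ≤ R ∧ ∀ x : ℝ, R ≤ |x| → (κ/2 + 1) * Real.log (1 + x ^ 2) ≤ V x := by
  obtain ⟨a, ha⟩ := eventually_atTop.1 (hVtop.eventually_ge_atTop (κ/2+1))
  obtain ⟨b, hb⟩ := eventually_atBot.1 (hVbot.eventually_ge_atTop (κ/2+1))
  refine ⟨max (max a 1) (max (-b) 1), le_trans (le_max_right a 1) (le_max_left _ _), ?_⟩
  intro x hx
  have hlogpos : 0 < Real.log (1 + x^2) := by
    apply Real.log_pos
    have h1 : (1:ℝ) ≤ |x| := le_trans (le_trans (le_max_right a 1) (le_max_left _ _)) hx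
    nlinarith [sq_abs x, abs_nonneg x]
  rcases le_or_gt 0 x with hx0 | hx0
  · have : a ≤ x := by
      rw [abs_of_nonneg hx0] at hx
      exact le_trans (le_trans (le_max_left a 1) (le_max_left _ _)) hx
    have := ha x this
    rwa [le_div_iff₀ hlogpos] at this
  · have : x ≤ b := by
      rw [abs_of_neg hx0] at hx
      have : -b ≤ -x := le_trans (le_trans (le_max_left (-b) 1) (le_max_right _ _)) hx
      linarith
    have := hb x this
    rwa [le_div_iff₀ hlogpos] at this

lemma integrable_hVk (V : ℝ → ℝ) (hVmeas : Measurable V) (m : ℝ) (hm : ∀ x, m ≤ V x)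
    (κ : ℝ) (hκ : 0 ≤ κ) (R : ℝ) (hR : 1 ≤ R)
    (htail : ∀ x : ℝ, R ≤ |x| → (κ/2 + 1) * Real.log (1 + x ^ 2) ≤ V x) :
    Integrable (hVk V κ) := by
  set B : ℝ → ℝ := fun x =>
    Set.indicator (Set.Icc (-R) R) (fun _ => (2*(1+R^2)) ^ (κ/2) * Real.exp (-m)) x
      + 2 ^ (κ/2) * (1+x^2)⁻¹ with hB
  have hBint : Integrable B := by
    apply Integrable.add
    · rw [integrable_indicator_iff measurableSet_Icc]
      exact integrableOn_const measure_Icc_lt_top.ne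
    · exact integrable_inv_one_add_sq.const_mul _
  refine Integrable.mono' hBint ((measurable_hVk hVmeas κ).aestronglyMeasurable) ?_
  refine ae_of_all _ fun x => ?_
  have hpos : 0 ≤ hVk V κ x := by
    unfold hVk; positivity
  rw [Real.norm_eq_abs, abs_of_nonneg hpos]
  rcases le_or_gt |x| R with hxR | hxR
  · have hmem : x ∈ Set.Icc (-R) R := by
      constructor <;> [linarith [neg_abs_le x]; linarith [le_abs_self x]]
    have h1 : (2*(1+x^2)) ^ (κ/2) ≤ (2*(1+R^2)) ^ (κ/2) := by
      apply Real.rpow_le_rpow (by positivity) ?_ (by linarith)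
      nlinarith [sq_abs x, abs_nonneg x]
    have h2 : Real.exp (-(V x)) ≤ Real.exp (-m) := by
      apply Real.exp_le_exp.2; linarith [hm x]
    have h3 : hVk V κ x ≤ (2*(1+R^2)) ^ (κ/2) * Real.exp (-m) := by
      unfold hVk
      apply mul_le_mul h1 h2 (Real.exp_pos _).le (by positivity)
    rw [hB]
    simp only [Set.indicator_of_mem hmem]
    have : (0:ℝ) ≤ 2 ^ (κ/2) * (1+x^2)⁻¹ := by positivity
    linarith
  · have hx1 : (0:ℝ) < 1 + x^2 := by positivity
    have h2 : Real.exp (-(V x)) ≤ (1+x^2) ^ (-(κ/2+1)) := by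
      rw [Real.rpow_def_of_pos hx1]
      apply Real.exp_le_exp.2
      have := htail x hxR.le
      nlinarith [Real.log_pos (show (1:ℝ) < 1 + x^2 by nlinarith [sq_abs x, abs_nonneg x])]
    have h3 : hVk V κ x ≤ (2*(1+x^2)) ^ (κ/2) * (1+x^2) ^ (-(κ/2+1)) := by
      unfold hVk
      apply mul_le_mul_of_nonneg_left h2 (by positivity)
    have h4 : (2*(1+x^2)) ^ (κ/2) * (1+x^2) ^ (-(κ/2+1)) = 2 ^ (κ/2) * (1+x^2)⁻¹ := by
      rw [Real.mul_rpow (by norm_num) hx1.le, mul_assoc, ← Real.rpow_add hx1]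
      have he : κ/2 + -(κ/2+1) = -1 := by ring
      rw [he, Real.rpow_neg_one]
    have hmem : x ∉ Set.Icc (-R) R := by
      intro hmem
      have := abs_le.2 ⟨hmem.1, hmem.2⟩
      linarith
    rw [hB]
    simp only [Set.indicator_of_notMem hmem]
    linarith [h3, h4.le]

lemma abs_sub_rpow_le {β : ℝ} (hβ : 0 ≤ β) (a b : ℝ) :
    |a - b| ^ β ≤ (2*(1+a^2)) ^ (β/2) * (2*(1+b^2)) ^ (β/2) := by
  have hX : (0:ℝ) ≤ (2*(1+a^2)) * (2*(1+b^2)) := by positivity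
  have h1 : |a - b| ≤ ((2*(1+a^2)) * (2*(1+b^2))) ^ ((1:ℝ)/2) := by
    rw [← Real.sqrt_eq_rpow]
    rw [show |a-b| = Real.sqrt (|a-b|^2) from (Real.sqrt_sq (abs_nonneg _)).symm]
    apply Real.sqrt_le_sqrt
    rw [sq_abs]
    nlinarith [sq_nonneg (a+b), sq_nonneg (a*b), sq_nonneg (a*b - 1), sq_nonneg (a*b + 1)]
  calc |a - b| ^ β ≤ (((2*(1+a^2)) * (2*(1+b^2))) ^ ((1:ℝ)/2)) ^ β :=
        Real.rpow_le_rpow (abs_nonneg _) h1 hβ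
  _ = ((2*(1+a^2)) * (2*(1+b^2))) ^ (β/2) := by
      rw [← Real.rpow_mul hX]
      ring_nf
  _ = (2*(1+a^2)) ^ (β/2) * (2*(1+b^2)) ^ (β/2) :=
      Real.mul_rpow (by positivity) (by positivity)

lemma prod_abs_rpow_le {κ β : ℝ} (hβ : 0 ≤ β) {n : ℕ} (hβn : β * n ≤ κ)
    (y : Fin n → ℝ) (t : ℝ) :
    (∏ i, |y i - t| ^ β) ≤ (∏ i, (2*(1+(y i)^2)) ^ (β/2)) * (2*(1+t^2)) ^ (κ/2) := by
  have h1 : (∏ i, |y i - t| ^ β)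
      ≤ ∏ i, ((2*(1+(y i)^2)) ^ (β/2) * (2*(1+t^2)) ^ (β/2)) := by
    apply Finset.prod_le_prod
    · intro i _; positivity
    · intro i _; exact abs_sub_rpow_le hβ (y i) t
  rw [Finset.prod_mul_distrib, Finset.prod_const, Finset.card_univ, Fintype.card_fin] at h1
  refine h1.trans (mul_le_mul_of_nonneg_left ?_ (Finset.prod_nonneg fun i _ => by positivity))
  rw [← Real.rpow_natCast ((2*(1+t^2)) ^ (β/2)) n, ← Real.rpow_mul (by positivity)]
  apply Real.rpow_le_rpow_of_exponent_le (one_le_q t)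
  calc β/2 * n = β * n / 2 := by ring
  _ ≤ κ/2 := by linarith

lemma continuous_prod_abs_rpow {β : ℝ} (hβ : 0 ≤ β) {n : ℕ} (y : Fin n → ℝ) :
    Continuous fun t : ℝ => ∏ i, |y i - t| ^ β := by
  apply continuous_finset_prod
  intro i _
  exact ((continuous_const.sub continuous_id).abs).rpow_const fun x => Or.inr hβ

lemma integrable_weighted (V : ℝ → ℝ) (hVmeas : Measurable V) {κ : ℝ}
    (hh : Integrable (hVk V κ)) {β : ℝ} (hβ : 0 ≤ β) {n : ℕ} (hβn : β * n ≤ κ)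
    (y : Fin n → ℝ) :
    Integrable (fun t => (∏ i, |y i - t| ^ β) * gV V t) := by
  set D := ∏ i, (2*(1+(y i)^2)) ^ (β/2) with hD
  have hD0 : 0 ≤ D := Finset.prod_nonneg fun i _ => by positivity
  apply Integrable.mono' (hh.const_mul D)
  · exact (((continuous_prod_abs_rpow hβ y).measurable).mul
      (measurable_gV hVmeas)).aestronglyMeasurable
  · refine ae_of_all _ fun t => ?_
    have h0 : (0:ℝ) ≤ (∏ i, |y i - t| ^ β) * gV V t := by
      apply mul_nonneg (Finset.prod_nonneg fun i _ => by positivity) (gV_nonneg V t)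
    rw [Real.norm_eq_abs, abs_of_nonneg h0]
    have h1 := prod_abs_rpow_le hβ hβn y t
    have h2 : (∏ i, |y i - t| ^ β) * gV V t
        ≤ (D * (2*(1+t^2)) ^ (κ/2)) * gV V t :=
      mul_le_mul_of_nonneg_right h1 (gV_nonneg V t)
    calc (∏ i, |y i - t| ^ β) * gV V t ≤ (D * (2*(1+t^2)) ^ (κ/2)) * gV V t := h2
    _ = D * hVk V κ t := by unfold hVk gV; ring

def KellV : ℝ := ∫ u, ell u

lemma KellV_nonneg : 0 ≤ KellV := integral_nonneg ell_nonneg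

def zV (V : ℝ → ℝ) : ℝ := ∫ x, gV V x

lemma zV_pos {V : ℝ → ℝ} (hg : Integrable (gV V)) : 0 < zV V := by
  rw [zV, integral_pos_iff_support_of_nonneg (gV_nonneg V) hg]
  have : Function.support (gV V) = Set.univ := by
    ext x; simp [Function.mem_support, gV, Real.exp_ne_zero]
  rw [this]
  simp

lemma integrable_ell_shift (y : ℝ) : Integrable (fun t : ℝ => ell (y - t)) := by
  have h : (fun t : ℝ => ell (y - t)) = fun t => ell (t - y) := by
    funext t
    simp only [ell]
    rw [abs_sub_comm]
  rw [h]
  exact integrable_ell.comp_sub_right y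

lemma integral_ell_shift (y : ℝ) : ∫ t : ℝ, ell (y - t) = KellV := by
  have h : (fun t : ℝ => ell (y - t)) = fun t => ell (t - y) := by
    funext t
    simp only [ell]
    rw [abs_sub_comm]
  rw [h]
  exact integral_sub_right_eq_self ell y

lemma integrable_ell_g (V : ℝ → ℝ) (hVmeas : Measurable V) (m : ℝ) (hm : ∀ x, m ≤ V x)
    (y : ℝ) : Integrable (fun t => ell (y - t) * gV V t) := by
  apply Integrable.mono' ((integrable_ell_shift y).const_mul (Real.exp (-m)))
  · exact ((measurable_ell.comp (measurable_const.sub measurable_id)).mul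
      (measurable_gV hVmeas)).aestronglyMeasurable
  · refine ae_of_all _ fun t => ?_
    have h0 : 0 ≤ ell (y - t) * gV V t := mul_nonneg (ell_nonneg _) (gV_nonneg V t)
    rw [Real.norm_eq_abs, abs_of_nonneg h0]
    have h1 : gV V t ≤ Real.exp (-m) := Real.exp_le_exp.2 (by linarith [hm t])
    calc ell (y - t) * gV V t ≤ ell (y - t) * Real.exp (-m) :=
          mul_le_mul_of_nonneg_left h1 (ell_nonneg _)
    _ = Real.exp (-m) * ell (y - t) := by ring

lemma integral_ell_g_le (V : ℝ → ℝ) (hVmeas : Measurable V) (m : ℝ) (hm : ∀ x, m ≤ V x)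
    (y : ℝ) : ∫ t, ell (y - t) * gV V t ≤ Real.exp (-m) * KellV := by
  have h1 : ∫ t, ell (y - t) * gV V t ≤ ∫ t, Real.exp (-m) * ell (y - t) := by
    apply integral_mono (integrable_ell_g V hVmeas m hm y)
      ((integrable_ell_shift y).const_mul _)
    intro t
    show ell (y - t) * gV V t ≤ Real.exp (-m) * ell (y - t)
    have h1 : gV V t ≤ Real.exp (-m) := Real.exp_le_exp.2 (by linarith [hm t])
    have h2 := ell_nonneg (y - t)
    nlinarith [mul_le_mul_of_nonneg_left h1 h2]
  rwa [integral_const_mul, integral_ell_shift y] at h1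

lemma step_lemma (V : ℝ → ℝ) (hVmeas : Measurable V) (m : ℝ) (hm : ∀ x, m ≤ V x)
    {κ : ℝ} (hκ : 0 < κ) (hh : Integrable (hVk V κ)) (hg : Integrable (gV V))
    {β : ℝ} {n : ℕ} (hβ : 0 < β) (hβκ : β ≤ κ) (hβn : β * n ≤ κ) (y : Fin n → ℝ) :
    (zV V / 2) * Real.exp (-(2*κ*Real.exp (-m)*(KellV+1)/(zV V) + κ))
      ≤ ∫ t, (∏ i, |y i - t| ^ β) * gV V t := by
  have hz : 0 < zV V := zV_pos hg
  have hK0 : 0 ≤ KellV := KellV_nonneg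
  set z := zV V with hzdef
  set K := KellV with hKdef
  set S : ℝ → ℝ := fun t => ∑ i, ell (y i - t) with hSdef
  have hSnn : ∀ t, 0 ≤ S t := fun t => Finset.sum_nonneg fun i _ => ell_nonneg _
  have hSmeas : Measurable S :=
    Finset.measurable_sum _ fun i _ => measurable_ell.comp (measurable_const.sub measurable_id)
  have hSgfun : (fun t => S t * gV V t) = fun t => ∑ i, ell (y i - t) * gV V t := by
    funext t
    rw [hSdef]
    simp [Finset.sum_mul]
  have hSg_int : Integrable (fun t => S t * gV V t) := by
    rw [hSgfun]
    exact integrable_finset_sum _ fun i _ => integrable_ell_g V hVmeas m hm (y i)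
  have hSg_val : ∫ t, S t * gV V t ≤ n * (Real.exp (-m) * (K+1)) := by
    rw [hSgfun, integral_finset_sum _ fun i _ => integrable_ell_g V hVmeas m hm (y i)]
    calc ∑ i : Fin n, ∫ t, ell (y i - t) * gV V t
        ≤ ∑ _i : Fin n, Real.exp (-m) * K :=
          Finset.sum_le_sum fun i _ => integral_ell_g_le V hVmeas m hm (y i)
    _ = n * (Real.exp (-m) * K) := by
          rw [Finset.sum_const, Finset.card_univ, Fintype.card_fin, nsmul_eq_mul]
    _ ≤ n * (Real.exp (-m) * (K+1)) := by
          have h1 : Real.exp (-m) * K ≤ Real.exp (-m) * (K+1) := by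
            nlinarith [Real.exp_pos (-m)]
          exact mul_le_mul_of_nonneg_left h1 (Nat.cast_nonneg n)
  set T : ℝ := 2*n*Real.exp (-m)*(K+1)/z + 1 with hTdef
  have hTaux : 0 ≤ 2*(n:ℝ)*Real.exp (-m)*(K+1)/z := by
    apply div_nonneg ?_ hz.le
    have h1 := Real.exp_pos (-m)
    have h2 : (0:ℝ) ≤ (n:ℝ) := Nat.cast_nonneg n
    have h3 : (0:ℝ) ≤ 2*(n:ℝ)*Real.exp (-m) := by positivity
    exact mul_nonneg h3 (by linarith)
  have hT0 : 0 < T := by rw [hTdef]; linarith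
  set B := {t : ℝ | T < S t} with hBdef
  have hBmeas : MeasurableSet B := measurableSet_lt measurable_const hSmeas
  have hintB : ∫ t in B, gV V t ≤ z/2 := by
    have h1 : ∫ t in B, gV V t ≤ ∫ t in B, S t * gV V t / T := by
      apply setIntegral_mono_on hg.integrableOn (hSg_int.div_const T).integrableOn hBmeas
      intro t ht
      rw [le_div_iff₀ hT0]
      have hts : T < S t := ht
      nlinarith [gV_nonneg V t]
    have h2 : ∫ t in B, S t * gV V t / T ≤ (∫ t, S t * gV V t)/T := by
      rw [integral_div]
      gcongr
      exact (ae_of_all _ fun t => mul_nonneg (hSnn t) (gV_nonneg V t))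
      exact Measure.restrict_le_self
    have h3 : (∫ t, S t * gV V t)/T ≤ z/2 := by
      rw [div_le_iff₀ hT0]
      have hexp : z/2*T = n*Real.exp (-m)*(K+1) + z/2 := by
        rw [hTdef]
        field_simp
      calc ∫ t, S t * gV V t ≤ n * (Real.exp (-m) * (K+1)) := hSg_val
      _ = n*Real.exp (-m)*(K+1) := by ring
      _ ≤ z/2*T := by rw [hexp]; linarith
    linarith
  have hcompl : z/2 ≤ ∫ t in Bᶜ, gV V t := by
    have hadd := integral_add_compl hBmeas hg
    have hzz : z = ∫ t, gV V t := hzdef.trans rfl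
    linarith [hintB]
  have hae : ∀ᵐ t : ℝ, t ∈ Bᶜ →
      Real.exp (-(β*T)) * gV V t ≤ (∏ i, |y i - t| ^ β) * gV V t := by
    have hnull : ∀ᵐ t : ℝ, t ∉ (⋃ i, {y i} : Set ℝ) := by
      rw [← measure_eq_zero_iff_ae_notMem]
      exact measure_iUnion_null fun i => measure_singleton _
    filter_upwards [hnull] with t ht htB
    have hne : ∀ i : Fin n, y i - t ≠ 0 := by
      intro i h0
      apply ht
      refine Set.mem_iUnion.2 ⟨i, ?_⟩
      simp only [Set.mem_singleton_iff]
      linarith [sub_eq_zero.1 h0]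
    have hst : S t ≤ T := not_lt.1 htB
    have hp : Real.exp (-(β * T)) ≤ ∏ i, |y i - t| ^ β := by
      have e2 : -(β * S t) = ∑ i, -(β * ell (y i - t)) := by
        rw [hSdef, Finset.mul_sum]
        simp
      calc Real.exp (-(β*T)) ≤ Real.exp (-(β * S t)) := by
            apply Real.exp_le_exp.2
            nlinarith
      _ = ∏ i, Real.exp (-(β * ell (y i - t))) := by rw [e2, Real.exp_sum]
      _ ≤ ∏ i, |y i - t| ^ β :=
            Finset.prod_le_prod (fun i _ => (Real.exp_pos _).le)
              (fun i _ => exp_neg_ell_le hβ.le (hne i))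
    exact mul_le_mul_of_nonneg_right hp (gV_nonneg V t)
  have hIw : Integrable (fun t => (∏ i, |y i - t| ^ β) * gV V t) :=
    integrable_weighted V hVmeas hh hβ.le hβn y
  have key1 : ∫ t in Bᶜ, Real.exp (-(β*T)) * gV V t
      ≤ ∫ t in Bᶜ, (∏ i, |y i - t| ^ β) * gV V t := by
    apply setIntegral_mono_ae_restrict ((hg.const_mul _).integrableOn) hIw.integrableOn
    rw [EventuallyLE, ae_restrict_iff' hBmeas.compl]
    exact hae
  have key2 : ∫ t in Bᶜ, (∏ i, |y i - t| ^ β) * gV V t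
      ≤ ∫ t, (∏ i, |y i - t| ^ β) * gV V t :=
    setIntegral_le_integral hIw (ae_of_all _ fun t =>
      mul_nonneg (Finset.prod_nonneg fun i _ => by positivity) (gV_nonneg V t))
  have key3 : ∫ t in Bᶜ, Real.exp (-(β*T)) * gV V t
      = Real.exp (-(β*T)) * ∫ t in Bᶜ, gV V t := integral_const_mul _ _
  have hβT : β * T ≤ 2*κ*Real.exp (-m)*(K+1)/z + κ := by
    rw [hTdef]
    have hE : 0 ≤ Real.exp (-m) * (K+1) / z := by
      apply div_nonneg ?_ hz.le
      nlinarith [Real.exp_pos (-m)]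
    have hrw1 : 2*(n:ℝ)*Real.exp (-m)*(K+1)/z = 2*(n:ℝ)*(Real.exp (-m)*(K+1)/z) := by ring
    have hrw2 : 2*κ*Real.exp (-m)*(K+1)/z = 2*κ*(Real.exp (-m)*(K+1)/z) := by ring
    rw [hrw1, hrw2]
    nlinarith [mul_le_mul_of_nonneg_right hβn
      (mul_nonneg (by norm_num : (0:ℝ) ≤ 2) hE)]
  have hfin1 : (z/2) * Real.exp (-(2*κ*Real.exp (-m)*(K+1)/z + κ))
      ≤ (z/2) * Real.exp (-(β*T)) := by
    apply mul_le_mul_of_nonneg_left ?_ (by linarith)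
    exact Real.exp_le_exp.2 (by linarith)
  have hfin2 : (z/2) * Real.exp (-(β*T)) ≤ Real.exp (-(β*T)) * ∫ t in Bᶜ, gV V t := by
    rw [mul_comm]
    exact mul_le_mul_of_nonneg_left hcompl (Real.exp_pos _).le
  linarith [hfin1, hfin2, key1, key2, key3]

lemma measurable_betaWeight (V : ℝ → ℝ) (hV : Measurable V) {β : ℝ} (hβ : 0 ≤ β) (N : ℕ) :
    Measurable (betaWeight V β N) := by
  apply Measurable.mul
  · apply Finset.measurable_prod _ fun i _ => ?_
    apply Finset.measurable_prod _ fun j _ => ?_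
    have hc : Continuous fun lam : Fin N → ℝ => |lam j - lam i| :=
      ((continuous_apply j).sub (continuous_apply i)).abs
    exact (hc.rpow_const fun x => Or.inr hβ).measurable
  · exact ((Finset.measurable_sum _ fun i _ => hV.comp (measurable_pi_apply i)).neg).exp

lemma betaWeight_nonneg (V : ℝ → ℝ) (β : ℝ) (N : ℕ) (lam : Fin N → ℝ) :
    0 ≤ betaWeight V β N lam := by
  unfold betaWeight
  apply mul_nonneg ?_ (Real.exp_pos _).le
  exact Finset.prod_nonneg fun i _ => Finset.prod_nonneg fun j _ => by positivity

lemma betaWeight_le (V : ℝ → ℝ) {κ β : ℝ} (hβ : 0 ≤ β) {N : ℕ} (hβN : β * N ≤ κ)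
    (lam : Fin N → ℝ) :
    betaWeight V β N lam ≤ ∏ i, hVk V κ (lam i) := by
  unfold betaWeight
  set f : Fin N → ℝ := fun k => (2*(1+(lam k)^2)) ^ (β/2) with hf
  have hf1 : ∀ k, (1:ℝ) ≤ f k := by
    intro k
    rw [hf]
    have := Real.rpow_le_rpow zero_le_one (one_le_q (lam k)) (by linarith : 0 ≤ β/2)
    rwa [Real.one_rpow] at this
  have hexp : Real.exp (-∑ i, V (lam i)) = ∏ i, Real.exp (-(V (lam i))) := by
    rw [← Real.exp_sum]
    congr 1
    rw [← Finset.sum_neg_distrib]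
  have h1 : (∏ i, ∏ j ∈ Finset.Ioi i, |lam j - lam i| ^ β)
      ≤ ∏ i, ∏ j ∈ Finset.Ioi i, (f i * f j) := by
    apply Finset.prod_le_prod
    · intro i _
      exact Finset.prod_nonneg fun j _ => by positivity
    · intro i _
      apply Finset.prod_le_prod
      · intro j _; positivity
      · intro j _
        have := abs_sub_rpow_le hβ (lam j) (lam i)
        rw [hf]
        calc |lam j - lam i| ^ β
            ≤ (2*(1+(lam j)^2)) ^ (β/2) * (2*(1+(lam i)^2)) ^ (β/2) := this
        _ = (2*(1+(lam i)^2)) ^ (β/2) * (2*(1+(lam j)^2)) ^ (β/2) := by ring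
  rw [prod_pair_eq f] at h1
  have h2 : ∀ k, f k ^ (N - 1) * Real.exp (-(V (lam k))) ≤ hVk V κ (lam k) := by
    intro k
    unfold hVk
    apply mul_le_mul_of_nonneg_right ?_ (Real.exp_pos _).le
    rw [hf, ← Real.rpow_natCast ((2*(1+(lam k)^2)) ^ (β/2)) (N-1),
      ← Real.rpow_mul (by positivity)]
    apply Real.rpow_le_rpow_of_exponent_le (one_le_q (lam k))
    have hcast : ((N - 1 : ℕ) : ℝ) ≤ (N : ℝ) := by
      exact_mod_cast Nat.cast_le.2 (Nat.sub_le N 1)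
    have : β/2 * ((N - 1 : ℕ) : ℝ) ≤ β/2 * (N : ℝ) :=
      mul_le_mul_of_nonneg_left hcast (by linarith)
    nlinarith
  calc (∏ i, ∏ j ∈ Finset.Ioi i, |lam j - lam i| ^ β) * Real.exp (-∑ i, V (lam i))
      ≤ (∏ k, f k ^ (N - 1)) * Real.exp (-∑ i, V (lam i)) := by
        apply mul_le_mul_of_nonneg_right h1 (Real.exp_pos _).le
  _ = ∏ k, (f k ^ (N - 1) * Real.exp (-(V (lam k)))) := by
        rw [hexp, Finset.prod_mul_distrib]
  _ ≤ ∏ k, hVk V κ (lam k) := by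
        apply Finset.prod_le_prod
        · intro k _
          have := hf1 k
          positivity
        · intro k _
          exact h2 k

lemma integrable_betaWeight (V : ℝ → ℝ) (hVmeas : Measurable V) {κ : ℝ}
    (hh : Integrable (hVk V κ)) {β : ℝ} (hβ : 0 ≤ β) {N : ℕ} (hβN : β * N ≤ κ) :
    Integrable (betaWeight V β N) := by
  have hprod : Integrable (fun lam : Fin N → ℝ => ∏ i, hVk V κ (lam i)) :=
    Integrable.fintype_prod (fun _ => hh)
  apply Integrable.mono' hprod ((measurable_betaWeight V hVmeas hβ N).aestronglyMeasurable)
  refine ae_of_all _ fun lam => ?_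
  rw [Real.norm_eq_abs, abs_of_nonneg (betaWeight_nonneg V β N lam)]
  exact betaWeight_le V hβ hβN lam

lemma Zpart_one (V : ℝ → ℝ) (β : ℝ) : Zpart V β 1 = zV V := by
  have h1 : ∀ lam : Fin 1 → ℝ, betaWeight V β 1 lam = gV V (lam 0) := by
    intro lam
    unfold betaWeight gV
    rw [Fin.prod_univ_one, Fin.sum_univ_one]
    have h0 : (Finset.Ioi (0 : Fin 1)) = ∅ := rfl
    rw [h0, Finset.prod_empty, one_mul]
  unfold Zpart
  simp_rw [h1]
  have mp := volume_preserving_funUnique (Fin 1) ℝ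
  have h2 : (fun lam : Fin 1 → ℝ => gV V (lam 0))
      = fun lam : Fin 1 → ℝ => gV V ((MeasurableEquiv.funUnique (Fin 1) ℝ) lam) := by
    funext lam
    have : (MeasurableEquiv.funUnique (Fin 1) ℝ) lam = lam default := rfl
    rw [this, Fin.default_eq_zero]
  rw [h2]
  exact (mp.integral_comp (MeasurableEquiv.measurableEmbedding _) (gV V)).trans rfl

lemma Zpart_succ_ge (V : ℝ → ℝ) (hVmeas : Measurable V) (m : ℝ) (hm : ∀ x, m ≤ V x)
    {κ : ℝ} (hκ : 0 < κ) (hh : Integrable (hVk V κ)) (hg : Integrable (gV V))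
    {β : ℝ} {N : ℕ} (hβ : 0 < β) (hβκ : β ≤ κ) (hβN : β * (N+1 : ℕ) ≤ κ) :
    ((zV V / 2) * Real.exp (-(2*κ*Real.exp (-m)*(KellV+1)/(zV V) + κ))) * Zpart V β N
      ≤ Zpart V β (N+1) := by
  have hz : 0 < zV V := zV_pos hg
  set c := (zV V / 2) * Real.exp (-(2*κ*Real.exp (-m)*(KellV+1)/(zV V) + κ)) with hc
  have hc0 : 0 ≤ c := by
    rw [hc]
    apply mul_nonneg (by linarith) (Real.exp_pos _).le
  have hβN' : β * N ≤ κ := by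
    push_cast at hβN
    nlinarith
  have mp := measurePreserving_piFinSuccAbove (fun _ : Fin (N+1) => (volume : Measure ℝ)) 0
  set e := MeasurableEquiv.piFinSuccAbove (fun _ : Fin (N+1) => ℝ) 0 with he
  have hint : Integrable (betaWeight V β (N+1)) :=
    integrable_betaWeight V hVmeas hh hβ.le hβN
  have hesymm : ∀ (t : ℝ) (lam : Fin N → ℝ),
      e.symm (t, lam) = (Fin.cons t lam : Fin (N+1) → ℝ) := by
    intro t lam
    rw [he]
    simp [MeasurableEquiv.piFinSuccAbove_symm_apply, Fin.insertNthEquiv, Fin.insertNth_zero']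
  have hsplit : ∀ (t : ℝ) (lam : Fin N → ℝ),
      betaWeight V β (N+1) (e.symm (t, lam))
        = betaWeight V β N lam * ((∏ i, |lam i - t| ^ β) * gV V t) := by
    intro t lam
    rw [hesymm t lam]
    unfold betaWeight gV
    exact betaWeight_cons V β N t lam
  have hint' : Integrable (fun p : ℝ × (Fin N → ℝ) => betaWeight V β (N+1) (e.symm p))
      ((volume : Measure ℝ).prod (Measure.pi fun _ : Fin N => (volume : Measure ℝ))) := by
    have := ((mp.symm e).integrable_comp_emb e.symm.measurableEmbedding).2 hint
    exact this
  have h0 : Zpart V β (N+1)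
      = ∫ lam : Fin N → ℝ, ∫ t : ℝ,
          betaWeight V β N lam * ((∏ i, |lam i - t| ^ β) * gV V t) := by
    unfold Zpart
    rw [volume_pi, ← (mp.symm e).integral_comp e.symm.measurableEmbedding (betaWeight V β (N+1))]
    rw [integral_prod_symm _ hint']
    rw [← volume_pi]
    simp_rw [hsplit]
  have hbwint : Integrable (betaWeight V β N) :=
    integrable_betaWeight V hVmeas hh hβ.le hβN'
  have hOuter : Integrable (fun lam : Fin N → ℝ => ∫ t : ℝ,
      betaWeight V β N lam * ((∏ i, |lam i - t| ^ β) * gV V t)) := by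
    have h := hint'.integral_prod_right
    have h2 : Integrable (fun lam : Fin N → ℝ => ∫ t : ℝ,
        betaWeight V β N lam * ((∏ i, |lam i - t| ^ β) * gV V t))
        (Measure.pi fun _ : Fin N => (volume : Measure ℝ)) := by
      refine h.congr (ae_of_all _ fun lam => ?_)
      show (∫ t : ℝ, betaWeight V β (N+1) (e.symm (t, lam)))
          = ∫ t : ℝ, betaWeight V β N lam * ((∏ i, |lam i - t| ^ β) * gV V t)
      simp_rw [hsplit]
    exact h2
  have hpt : ∀ lam : Fin N → ℝ, c * betaWeight V β N lam
      ≤ ∫ t : ℝ, betaWeight V β N lam * ((∏ i, |lam i - t| ^ β) * gV V t) := by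
    intro lam
    rw [integral_const_mul]
    rw [mul_comm c]
    exact mul_le_mul_of_nonneg_left
      (step_lemma V hVmeas m hm hκ hh hg hβ hβκ hβN' lam)
      (betaWeight_nonneg V β N lam)
  calc c * Zpart V β N = ∫ lam : Fin N → ℝ, c * betaWeight V β N lam :=
        (integral_const_mul c _).symm
  _ ≤ ∫ lam : Fin N → ℝ, ∫ t : ℝ,
        betaWeight V β N lam * ((∏ i, |lam i - t| ^ β) * gV V t) :=
      integral_mono (hbwint.const_mul c) hOuter hpt
  _ = Zpart V β (N+1) := h0.symm

end BetaAux

theorem stmt1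
    (V : ℝ → ℝ) (hVmeas : Measurable V) (hVbdd : BddBelow (Set.range V))
    (hVtop : Tendsto (fun x => V x / Real.log (1 + x ^ 2)) atTop atTop)
    (hVbot : Tendsto (fun x => V x / Real.log (1 + x ^ 2)) atBot atTop)
    (κ : ℝ) (hκ : 0 < κ) :
    ∃ C : ℝ, ∀ (β : ℝ) (N : ℕ), 0 < β → 1 ≤ N → β * N ≤ κ →
      C ≤ Real.log (Zpart V β N) / N := by
  classical
  obtain ⟨m, hm'⟩ := hVbdd
  have hm : ∀ x, m ≤ V x := fun x => hm' (Set.mem_range_self x)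
  obtain ⟨R, hR1, htail⟩ := BetaAux.exists_tail V κ hVtop hVbot
  have hh : Integrable (BetaAux.hVk V κ) :=
    BetaAux.integrable_hVk V hVmeas m hm κ hκ.le R hR1 htail
  have hg : Integrable (BetaAux.gV V) := by
    apply Integrable.mono' hh ((BetaAux.measurable_gV hVmeas).aestronglyMeasurable)
    refine ae_of_all _ fun x => ?_
    rw [Real.norm_eq_abs, abs_of_nonneg (BetaAux.gV_nonneg V x)]
    exact BetaAux.gV_le_hVk V hκ.le x
  have hz : 0 < BetaAux.zV V := BetaAux.zV_pos hg
  set z := BetaAux.zV V with hzdef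
  set c := (z / 2) * Real.exp (-(2*κ*Real.exp (-m)*(BetaAux.KellV+1)/z + κ)) with hcdef
  have hc0 : 0 < c := mul_pos (by linarith) (Real.exp_pos _)
  refine ⟨min (Real.log z) 0 + min (Real.log c) 0, ?_⟩
  intro β N hβ hN hβN
  have hN1 : (1:ℝ) ≤ (N:ℝ) := by exact_mod_cast hN
  have hβκ : β ≤ κ := by nlinarith
  have key : ∀ M : ℕ, 1 ≤ M → β * M ≤ κ → z * c ^ (M - 1) ≤ Zpart V β M := by
    intro M
    induction M with
    | zero => intro h; omega
    | succ n ih =>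
      intro _ hβM
      by_cases hn : n = 0
      · subst hn
        rw [BetaAux.Zpart_one V β]
        simpa using hzdef.le
      · have hn1 : 1 ≤ n := Nat.one_le_iff_ne_zero.2 hn
        obtain ⟨k, rfl⟩ : ∃ k, n = k + 1 := ⟨n - 1, (Nat.succ_pred_eq_of_pos hn1).symm⟩
        have hβn : β * ((k+1 : ℕ) : ℝ) ≤ κ := by
          push_cast at hβM ⊢
          nlinarith
        have ih' := ih (by omega) hβn
        have step := BetaAux.Zpart_succ_ge V hVmeas m hm hκ hh hg hβ hβκ hβM
        calc z * c ^ (k + 1 + 1 - 1) = c * (z * c ^ (k + 1 - 1)) := by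
              simp only [Nat.add_sub_cancel]
              rw [pow_succ]
              ring
        _ ≤ c * Zpart V β (k+1) := mul_le_mul_of_nonneg_left ih' hc0.le
        _ ≤ Zpart V β (k+1+1) := step
  have hZ := key N hN hβN
  have hZpos : 0 < Zpart V β N := lt_of_lt_of_le (by positivity) hZ
  have hlog : Real.log z + ((N - 1 : ℕ) : ℝ) * Real.log c ≤ Real.log (Zpart V β N) := by
    have h1 : Real.log (z * c ^ (N-1)) = Real.log z + ((N - 1 : ℕ) : ℝ) * Real.log c := by
      rw [Real.log_mul (ne_of_gt hz) (by positivity), Real.log_pow]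
    rw [← h1]
    exact Real.log_le_log (by positivity) hZ
  have hNpos : (0:ℝ) < (N:ℝ) := by linarith
  rw [le_div_iff₀ hNpos]
  have hcast : ((N - 1 : ℕ) : ℝ) = (N:ℝ) - 1 := by
    rw [Nat.cast_sub hN]
    norm_num
  have h1 : min (Real.log z) 0 * N ≤ Real.log z := by
    rcases le_or_gt 0 (Real.log z) with h | h
    · rw [min_eq_right h]
      linarith
    · rw [min_eq_left h.le]
      nlinarith
  have h2 : min (Real.log c) 0 * N ≤ ((N - 1 : ℕ) : ℝ) * Real.log c := by
    rw [hcast]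
    rcases le_or_gt 0 (Real.log c) with h | h
    · rw [min_eq_right h]
      nlinarith
    · rw [min_eq_left h.le]
      nlinarith
  nlinarith [h1, h2, hlog]
end
end

section
/- Let φ : ℝ → ℝ be measurable with ∫_ℝ |x|^k e^{φ(x)−V(x)} dx < ∞ for every k = 0,1,2,…, and set Z_N^{(φ)} = ∫_{ℝ^N} ∏_{i<j}|λ_j−λ_i|^β ∏_{i=1}^N e^{φ(λ_i)−V(λ_i)} dλ. Then for every κ > 0 there is a constant C_{φ,κ} such that for all β > 0 and N ∈ ℕ with βN ≤ κ, (log Z_N^{(φ)})/N ≤ C_{φ,κ}. -/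
open MeasureTheory Real Filter Finset

noncomputable section

/-- The partition function with modified potential `V - φ`:
`Z_N^{(φ)} = ∫_{ℝ^N} ∏_{i<j}|λ_j−λ_i|^β ∏_i e^{φ(λ_i)−V(λ_i)} dλ`. -/
def Zphi (V φ : ℝ → ℝ) (β : ℝ) (N : ℕ) : ℝ :=
  ∫ lam : Fin N → ℝ,
    (∏ i : Fin N, ∏ j ∈ Finset.Ioi i, |lam j - lam i| ^ β) *
      ∏ i : Fin N, Real.exp (φ (lam i) - V (lam i))

lemma prod_pairs_eq {N : ℕ} (f : Fin N → ℝ) :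
    ∏ i : Fin N, ∏ j ∈ Finset.Ioi i, (f i * f j) = ∏ i, f i ^ (N - 1) := by
  have h1 : ∏ i : Fin N, ∏ j ∈ Finset.Ioi i, (f i * f j)
      = (∏ i : Fin N, ∏ j ∈ Finset.Ioi i, f i) * ∏ i : Fin N, ∏ j ∈ Finset.Ioi i, f j := by
    rw [← Finset.prod_mul_distrib]
    exact Finset.prod_congr rfl fun i _ => Finset.prod_mul_distrib
  have h2 : (∏ i : Fin N, ∏ j ∈ Finset.Ioi i, f i) = ∏ i : Fin N, f i ^ (N - 1 - (i : ℕ)) := by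
    refine Finset.prod_congr rfl fun i _ => ?_
    rw [Finset.prod_const, Fin.card_Ioi]
  have h3 : (∏ i : Fin N, ∏ j ∈ Finset.Ioi i, f j) = ∏ j : Fin N, f j ^ (j : ℕ) := by
    rw [Finset.prod_comm' (t' := Finset.univ) (s' := fun j => Finset.Iio j)]
    · refine Finset.prod_congr rfl fun j _ => ?_
      rw [Finset.prod_const, Fin.card_Iio]
    · intro i j
      simp [Finset.mem_Ioi, Finset.mem_Iio]
  rw [h1, h2, h3, ← Finset.prod_mul_distrib]
  refine Finset.prod_congr rfl fun i _ => ?_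
  rw [← pow_add]
  congr 1
  have := i.isLt
  omega

lemma abs_sub_le_key (a b : ℝ) : |b - a| ≤ (1 + a ^ 2) * (1 + b ^ 2) := by
  rw [abs_le]
  constructor <;> nlinarith [sq_nonneg (a - b), sq_nonneg (a + b), sq_nonneg a, sq_nonneg b,
    sq_nonneg (a * b), sq_nonneg (a * b - 1), sq_nonneg (a * b + 1)]

theorem stmt2
    (V : ℝ → ℝ) (hVmeas : Measurable V) (hVbdd : BddBelow (Set.range V))
    (hVtop : Tendsto (fun x => V x / Real.log (1 + x ^ 2)) atTop atTop)
    (hVbot : Tendsto (fun x => V x / Real.log (1 + x ^ 2)) atBot atTop)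
    (φ : ℝ → ℝ) (hφmeas : Measurable φ)
    (hφint : ∀ k : ℕ, Integrable (fun x => |x| ^ k * Real.exp (φ x - V x)))
    (κ : ℝ) (hκ : 0 < κ) :
    ∃ C : ℝ, ∀ (β : ℝ) (N : ℕ), 0 < β → 1 ≤ N → β * N ≤ κ →
      Real.log (Zphi V φ β N) / N ≤ C := by
  set m : ℕ := ⌈κ⌉₊ with hm_def
  have hκm : κ ≤ (m : ℝ) := Nat.le_ceil κ
  set g : ℝ → ℝ := fun x => (1 + x ^ 2) ^ m * Real.exp (φ x - V x) with hg_def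
  -- integrability of g
  have hg_int : Integrable g := by
    have : g = fun x => ∑ k ∈ Finset.range (m + 1),
        (m.choose k : ℝ) * (|x| ^ (2 * k) * Real.exp (φ x - V x)) := by
      funext x
      have hexp : (1 + x ^ 2) ^ m
          = ∑ k ∈ Finset.range (m + 1), (x ^ 2) ^ k * (1 : ℝ) ^ (m - k) * (m.choose k : ℝ) := by
        rw [add_comm (1 : ℝ) (x ^ 2), add_pow]
      rw [hg_def]
      simp only [hexp, one_pow, mul_one, Finset.sum_mul]
      refine Finset.sum_congr rfl fun k _ => ?_
      have : (x ^ 2) ^ k = |x| ^ (2 * k) := by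
        rw [← sq_abs, ← pow_mul]
      rw [this]; ring
    rw [this]
    exact integrable_finset_sum _ fun k _ => (hφint (2 * k)).const_mul _
  set I : ℝ := ∫ x, g x with hI_def
  refine ⟨|Real.log I|, fun β N hβ hN hβN => ?_⟩
  have hNpos : (0 : ℝ) < N := by exact_mod_cast hN
  -- Z is nonneg
  have hZnonneg : 0 ≤ Zphi V φ β N := by
    refine integral_nonneg fun lam => ?_
    refine mul_nonneg (Finset.prod_nonneg fun i _ => Finset.prod_nonneg fun j _ =>
      Real.rpow_nonneg (abs_nonneg _) _) (Finset.prod_nonneg fun i _ => (Real.exp_pos _).le)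
  -- pointwise bound
  have hpoint : ∀ lam : Fin N → ℝ,
      (∏ i : Fin N, ∏ j ∈ Finset.Ioi i, |lam j - lam i| ^ β) *
        ∏ i : Fin N, Real.exp (φ (lam i) - V (lam i)) ≤ ∏ i, g (lam i) := by
    intro lam
    have hA1 : ∀ i : Fin N, (1 : ℝ) ≤ 1 + lam i ^ 2 := fun i => by nlinarith [sq_nonneg (lam i)]
    have hA0 : ∀ i : Fin N, (0 : ℝ) ≤ 1 + lam i ^ 2 := fun i => le_trans zero_le_one (hA1 i)
    have step1 : (∏ i : Fin N, ∏ j ∈ Finset.Ioi i, |lam j - lam i| ^ β)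
        ≤ ∏ i : Fin N, ∏ j ∈ Finset.Ioi i,
            ((1 + lam i ^ 2) ^ β * (1 + lam j ^ 2) ^ β) := by
      refine Finset.prod_le_prod (fun i _ => Finset.prod_nonneg fun j _ =>
          Real.rpow_nonneg (abs_nonneg _) _) fun i _ => ?_
      refine Finset.prod_le_prod (fun j _ => Real.rpow_nonneg (abs_nonneg _) _) fun j _ => ?_
      rw [← Real.mul_rpow (hA0 i) (hA0 j)]
      exact Real.rpow_le_rpow (abs_nonneg _) (abs_sub_le_key (lam i) (lam j)) hβ.le
    have step2 : (∏ i : Fin N, ∏ j ∈ Finset.Ioi i,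
          ((1 + lam i ^ 2) ^ β * (1 + lam j ^ 2) ^ β))
        = ∏ i : Fin N, ((1 + lam i ^ 2) ^ β) ^ (N - 1) :=
      prod_pairs_eq (fun i => (1 + lam i ^ 2) ^ β)
    have step3 : ∀ i : Fin N, ((1 + lam i ^ 2) ^ β) ^ (N - 1) ≤ (1 + lam i ^ 2) ^ m := by
      intro i
      have h1 : ((1 + lam i ^ 2) ^ β) ^ (N - 1)
          = (1 + lam i ^ 2) ^ (β * ((N : ℝ) - 1)) := by
        rw [← Real.rpow_natCast ((1 + lam i ^ 2) ^ β) (N - 1), ← Real.rpow_mul (hA0 i)]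
        congr 1
        have : ((N - 1 : ℕ) : ℝ) = (N : ℝ) - 1 := by
          have : (1 : ℕ) ≤ N := hN
          push_cast [Nat.cast_sub this]
          ring
        rw [this]
      rw [h1]
      calc (1 + lam i ^ 2) ^ (β * ((N : ℝ) - 1)) ≤ (1 + lam i ^ 2) ^ (m : ℝ) := by
            refine Real.rpow_le_rpow_of_exponent_le (hA1 i) ?_
            have : β * ((N : ℝ) - 1) ≤ β * N := by nlinarith
            linarith
        _ = (1 + lam i ^ 2) ^ m := Real.rpow_natCast _ m
    have step4 : (∏ i : Fin N, ((1 + lam i ^ 2) ^ β) ^ (N - 1))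
        ≤ ∏ i : Fin N, (1 + lam i ^ 2) ^ m :=
      Finset.prod_le_prod (fun i _ => pow_nonneg (Real.rpow_nonneg (hA0 i) _) _)
        (fun i _ => step3 i)
    calc (∏ i : Fin N, ∏ j ∈ Finset.Ioi i, |lam j - lam i| ^ β) *
          ∏ i : Fin N, Real.exp (φ (lam i) - V (lam i))
        ≤ (∏ i : Fin N, (1 + lam i ^ 2) ^ m) *
          ∏ i : Fin N, Real.exp (φ (lam i) - V (lam i)) := by
          refine mul_le_mul_of_nonneg_right ?_
            (Finset.prod_nonneg fun i _ => (Real.exp_pos _).le)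
          calc _ ≤ _ := step1
            _ = _ := step2
            _ ≤ _ := step4
      _ = ∏ i, g (lam i) := by rw [← Finset.prod_mul_distrib]
  -- integral bound
  have hZle : Zphi V φ β N ≤ I ^ N := by
    have h1 : Zphi V φ β N ≤ ∫ lam : Fin N → ℝ, ∏ i, g (lam i) := by
      refine integral_mono_of_nonneg ?_ (Integrable.fintype_prod fun _ => hg_int) ?_
      · refine Filter.Eventually.of_forall fun lam => ?_
        exact mul_nonneg (Finset.prod_nonneg fun i _ => Finset.prod_nonneg fun j _ =>
          Real.rpow_nonneg (abs_nonneg _) _)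
          (Finset.prod_nonneg fun i _ => (Real.exp_pos _).le)
      · exact Filter.Eventually.of_forall hpoint
    have h2 : (∫ lam : Fin N → ℝ, ∏ i, g (lam i)) = I ^ N := by
      rw [MeasureTheory.volume_pi, MeasureTheory.integral_fintype_prod_eq_pow g, Fintype.card_fin]
    rw [← h2]; exact h1
  rcases eq_or_lt_of_le hZnonneg with hZ0 | hZpos
  · rw [← hZ0, Real.log_zero, zero_div]
    exact abs_nonneg _
  · have hlog : Real.log (Zphi V φ β N) ≤ (N : ℝ) * Real.log I := by
      calc Real.log (Zphi V φ β N) ≤ Real.log (I ^ N) := Real.log_le_log hZpos hZle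
        _ = (N : ℝ) * Real.log I := by rw [Real.log_pow]
    rw [div_le_iff₀ hNpos]
    calc Real.log (Zphi V φ β N) ≤ (N : ℝ) * Real.log I := hlog
      _ ≤ (N : ℝ) * |Real.log I| := by
          exact mul_le_mul_of_nonneg_left (le_abs_self _) hNpos.le
      _ = |Real.log I| * N := by ring
end
end
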